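/- arXiv:math/0112251 — 3 statements merged into one kernel-verified Lean document; each statement's English description precedes it below -/
import Mathlib

section
/- Let Δ^P ⊆ Δ, let λ ∈ V be dominant, let w ∈ W_P, and set μ := w(λ + ρ) − ρ. Then: (i) ⟨wλ, γ∨⟩ ≥ 0 and ⟨wρ − ρ, γ∨⟩ ≥ 0 for every γ ∈ Φ^P ∩ Φ⁺; in particular ⟨μ, γ∨⟩ ≥ 0 for every γ ∈ Φ^P ∩ Φ⁺; and (ii) for every γ ∈ Φ^P, if ⟨μ, γ∨⟩ = 0 then ⟨wλ, γ∨⟩ = 0 and ⟨wρ − ρ, γ∨⟩ = 0. -/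
noncomputable section

open scoped RealInnerProductSpace

variable {V : Type*} [NormedAddCommGroup V] [InnerProductSpace ℝ V] [FiniteDimensional ℝ V]

/-- The reflection in the vector `γ` (as a function). -/
def sRefl (γ v : V) : V := v - (2 * ⟪v, γ⟫ / ⟪γ, γ⟫) • γ

/-- The coroot `γ∨ = 2γ/⟨γ,γ⟩` of `γ`. -/
def coroot (γ : V) : V := (2 / ⟪γ, γ⟫) • γ

/-- The Weyl group `W`: the subgroup of linear automorphisms generated by the
reflections in the roots. -/
def weylGroup (Φ : Finset V) : Subgroup (V ≃ₗ[ℝ] V) :=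
  Subgroup.closure {w : V ≃ₗ[ℝ] V | ∃ γ ∈ Φ, ∀ v, w v = sRefl γ v}

/-- `Φ_w = {γ ∈ Φ⁺ : w⁻¹ γ ∈ −Φ⁺}`. -/
def inversions (Φpos : Finset V) (w : V ≃ₗ[ℝ] V) : Set V :=
  {γ | γ ∈ Φpos ∧ -(w.symm γ) ∈ Φpos}

/-- `ℓ(w) = #Φ_w`. -/
def len (Φpos : Finset V) (w : V ≃ₗ[ℝ] V) : ℕ := (inversions Φpos w).ncard

/-- `Φ^P = Φ ∩ span(Δ^P)`. -/
def levi (Φ ΔP : Finset V) : Set V :=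
  {γ | γ ∈ Φ ∧ γ ∈ Submodule.span ℝ (ΔP : Set V)}

/-- `W_P = {w ∈ W : Φ_w ∩ Φ^P = ∅}`, the minimal length coset representatives of `W^P\W`. -/
def minimalCosetReps (Φ Φpos ΔP : Finset V) : Set (V ≃ₗ[ℝ] V) :=
  {w | w ∈ weylGroup Φ ∧ inversions Φpos w ∩ levi Φ ΔP = ∅}

/-- `pr_S`: the orthogonal projection onto the orthogonal complement of `span S`. -/
def pr (S : Set V) (v : V) : V :=
  (Submodule.orthogonalProjectionOnto (Submodule.span ℝ S)ᗮ v : V)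

/-- `Φ` is a finite (possibly non-reduced) root system spanning `V`, with base `Δ`
and associated positive system `Φpos`. -/
structure IsRootBase (Φ Δ Φpos : Finset V) : Prop where
  span_top : Submodule.span ℝ (Φ : Set V) = ⊤
  zero_not_mem : (0 : V) ∉ Φ
  refl_mem : ∀ γ ∈ Φ, ∀ δ ∈ Φ, sRefl γ δ ∈ Φ
  base_subset_pos : (Δ : Set V) ⊆ (Φpos : Set V)
  pos_subset : (Φpos : Set V) ⊆ (Φ : Set V)
  mem_or_neg_mem : ∀ γ ∈ Φ, γ ∈ Φpos ∨ -γ ∈ Φpos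
  not_mem_and_neg_mem : ∀ γ ∈ Φpos, -γ ∉ Φpos
  indep : LinearIndependent ℝ (fun x : (Δ : Set V) => (x : V))
  pos_comb : ∀ γ ∈ Φpos, ∃ c : V → ℝ, (∀ α ∈ Δ, 0 ≤ c α) ∧ γ = ∑ α ∈ Δ, c α • α

/-! ### Auxiliary lemmas -/

section Aux
set_option linter.unusedSectionVars false
set_option linter.unusedVariables false

lemma root_inner_self_pos {x : V} (hx : x ≠ 0) : (0:ℝ) < ⟪x, x⟫ :=
  lt_of_le_of_ne real_inner_self_nonneg
    (fun e => hx (inner_self_eq_zero.mp e.symm))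

lemma inner_sRefl_sRefl (γ u v : V) : ⟪sRefl γ u, sRefl γ v⟫ = ⟪u, v⟫ := by
  rcases eq_or_ne γ 0 with rfl | hγ
  · simp [sRefl]
  · have hg : ⟪γ, γ⟫ ≠ 0 := ne_of_gt (root_inner_self_pos hγ)
    simp only [sRefl, inner_sub_left, inner_sub_right, real_inner_smul_left,
      real_inner_smul_right]
    rw [real_inner_comm γ v]
    field_simp
    ring

lemma sRefl_sRefl (γ v : V) : sRefl γ (sRefl γ v) = v := by
  rcases eq_or_ne γ 0 with rfl | hγ
  · simp [sRefl]
  · have hg : ⟪γ, γ⟫ ≠ 0 := ne_of_gt (root_inner_self_pos hγ)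
    have hco : (2 * ⟪sRefl γ v, γ⟫ / ⟪γ, γ⟫) = -(2 * ⟪v, γ⟫ / ⟪γ, γ⟫) := by
      simp only [sRefl, inner_sub_left, real_inner_smul_left]
      field_simp
      ring
    show sRefl γ v - (2 * ⟪sRefl γ v, γ⟫ / ⟪γ, γ⟫) • γ = v
    rw [hco]
    show v - (2 * ⟪v, γ⟫ / ⟪γ, γ⟫) • γ - (-(2 * ⟪v, γ⟫ / ⟪γ, γ⟫)) • γ = v
    rw [neg_smul]
    abel

/-- Elements of the Weyl group preserve the inner product and permute `Φ`. -/
lemma weyl_props (Φ : Finset V) (hΦ : ∀ γ ∈ Φ, ∀ δ ∈ Φ, sRefl γ δ ∈ Φ)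
    {w : V ≃ₗ[ℝ] V} (hw : w ∈ weylGroup Φ) :
    (∀ u v, ⟪w u, w v⟫ = ⟪u, v⟫) ∧ (∀ γ ∈ Φ, w γ ∈ Φ) ∧ (∀ γ ∈ Φ, w.symm γ ∈ Φ) := by
  induction hw using Subgroup.closure_induction with
  | mem x hx =>
    obtain ⟨γ, hγ, hx⟩ := hx
    have hsymm : ∀ v, x.symm v = sRefl γ v := by
      intro v
      conv_lhs => rw [← sRefl_sRefl γ v, ← hx]
      exact x.symm_apply_apply _
    exact ⟨fun u v => by rw [hx, hx, inner_sRefl_sRefl],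
      fun δ hδ => by rw [hx]; exact hΦ γ hγ δ hδ,
      fun δ hδ => by rw [hsymm]; exact hΦ γ hγ δ hδ⟩
  | one => exact ⟨fun u v => rfl, fun δ hδ => hδ, fun δ hδ => hδ⟩
  | mul x y hx hy ihx ihy =>
    refine ⟨fun u v => ?_, fun δ hδ => ?_, fun δ hδ => ?_⟩
    · show ⟪x (y u), x (y v)⟫ = ⟪u, v⟫
      rw [ihx.1, ihy.1]
    · exact ihx.2.1 _ (ihy.2.1 δ hδ)
    · show y.symm (x.symm δ) ∈ Φ
      exact ihy.2.2 _ (ihx.2.2 δ hδ)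
  | inv x hx ihx =>
    refine ⟨fun u v => ?_, fun δ hδ => ihx.2.2 δ hδ, fun δ hδ => ihx.2.1 δ hδ⟩
    · show ⟪x.symm u, x.symm v⟫ = ⟪u, v⟫
      have h1 := ihx.1 (x.symm u) (x.symm v)
      rw [x.apply_symm_apply, x.apply_symm_apply] at h1
      exact h1.symm

/-- Coefficient comparison over the linearly independent base `Δ`. -/
lemma coeff_eq {Δ : Finset V}
    (hind : LinearIndependent ℝ (fun x : (Δ : Set V) => (x : V)))
    (c d : V → ℝ) (hcd : ∑ α ∈ Δ, c α • α = ∑ α ∈ Δ, d α • α) :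
    ∀ α ∈ Δ, c α = d α := by
  intro α hα
  have h0 : ∑ i ∈ (Finset.univ : Finset (Δ : Set V)), (c i - d i) • (i : V) = 0 := by
    have h1 : ∑ i : (Δ : Set V), (c i - d i) • (i : V)
        = ∑ α ∈ Δ, (c α - d α) • α := Finset.sum_coe_sort Δ (fun α => (c α - d α) • α)
    rw [h1]
    simp only [sub_smul, Finset.sum_sub_distrib, hcd, sub_self]
  have h2 : c α - d α = 0 := linearIndependent_iff'.mp hind Finset.univ
    (fun i => c i - d i) h0 ⟨α, hα⟩ (Finset.mem_univ _)
  linarith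

/-- A vector that is both a nonnegative and a nonpositive combination of `Δ` is zero;
here phrased as: if `x` and `-x` are both nonnegative combinations, all coefficients vanish. -/
lemma coeffs_vanish {Δ : Finset V}
    (hind : LinearIndependent ℝ (fun x : (Δ : Set V) => (x : V)))
    (c : V → ℝ) (hc : ∀ α ∈ Δ, 0 ≤ c α) (hsum : ∑ α ∈ Δ, c α • α = 0) :
    ∀ α ∈ Δ, c α = 0 := by
  intro α hα
  have := coeff_eq hind c (fun _ => 0) (by simpa using hsum) α hα
  simpa using this

/-- Dominance spreads from the base to all positive roots. -/
lemma inner_nonneg_of_pos {Φ Δ Φpos : Finset V} (h : IsRootBase Φ Δ Φpos)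
    {lam : V} (hdom : ∀ α ∈ Δ, 0 ≤ ⟪lam, coroot α⟫) {β : V} (hβ : β ∈ Φpos) :
    0 ≤ ⟪lam, β⟫ := by
  obtain ⟨c, hc0, hcβ⟩ := h.pos_comb β hβ
  rw [hcβ, inner_sum]
  refine Finset.sum_nonneg fun α hα => ?_
  rw [real_inner_smul_right]
  have hα0 : α ≠ 0 := fun e => h.zero_not_mem (e ▸ h.pos_subset (h.base_subset_pos hα))
  have hgα : (0:ℝ) < ⟪α, α⟫ := root_inner_self_pos hα0
  have hd := hdom α hα
  rw [coroot, real_inner_smul_right] at hd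
  have h2 : (0:ℝ) < 2 / ⟪α, α⟫ := by positivity
  have : 0 ≤ ⟪lam, α⟫ := nonneg_of_mul_nonneg_right hd h2
  exact mul_nonneg (hc0 α hα) this

/-- For `w ∈ W_P` and `γ` a positive root of the Levi, `w⁻¹ γ` is positive. -/
lemma symm_mem_pos {Φ Δ Φpos : Finset V} (h : IsRootBase Φ Δ Φpos)
    {ΔP : Finset V} {w : V ≃ₗ[ℝ] V} (hw : w ∈ minimalCosetReps Φ Φpos ΔP)
    {γ : V} (hγl : γ ∈ levi Φ ΔP) (hγp : γ ∈ Φpos) : w.symm γ ∈ Φpos := by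
  have hΦ : w.symm γ ∈ Φ :=
    (weyl_props Φ h.refl_mem hw.1).2.2 γ (h.pos_subset hγp)
  rcases h.mem_or_neg_mem _ hΦ with hp | hn
  · exact hp
  · exfalso
    have : γ ∈ inversions Φpos w ∩ levi Φ ΔP := ⟨⟨hγp, hn⟩, hγl⟩
    rw [hw.2] at this
    exact this

open Classical in
/-- `ρ − wρ` is the sum of the inversions of `w`. -/
lemma wrho_sub_rho {Φ Δ Φpos : Finset V} (h : IsRootBase Φ Δ Φpos)
    {w : V ≃ₗ[ℝ] V} (hwW : w ∈ weylGroup Φ) {ρ : V}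
    (hρ : ρ = (2⁻¹ : ℝ) • ∑ γ ∈ Φpos, γ) :
    w ρ - ρ = -∑ δ ∈ Φpos.filter (fun δ => -(w.symm δ) ∈ Φpos), δ := by
  classical
  set I := Φpos.filter (fun δ => -(w.symm δ) ∈ Φpos) with hI
  have W := weyl_props Φ h.refl_mem hwW
  have hIsub : I ⊆ Φpos := Finset.filter_subset _ _
  have h1 : ∑ β ∈ Φpos.filter (fun β => w β ∈ Φpos), w β = ∑ δ ∈ Φpos \ I, δ := by
    refine Finset.sum_nbij' (fun β => w β) (fun δ => w.symm δ) ?_ ?_ ?_ ?_ ?_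
    · intro β hβ
      rw [Finset.mem_filter] at hβ
      rw [Finset.mem_sdiff]
      refine ⟨hβ.2, ?_⟩
      rw [hI, Finset.mem_filter]
      rintro ⟨-, hneg⟩
      rw [w.symm_apply_apply] at hneg
      exact h.not_mem_and_neg_mem β hβ.1 hneg
    · intro δ hδ
      rw [Finset.mem_sdiff] at hδ
      have hδΦ : w.symm δ ∈ Φ := W.2.2 δ (h.pos_subset hδ.1)
      have hδp : w.symm δ ∈ Φpos := by
        rcases h.mem_or_neg_mem _ hδΦ with hp | hn
        · exact hp
        · exfalso
          refine hδ.2 ?_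
          rw [hI, Finset.mem_filter]
          exact ⟨hδ.1, hn⟩
      rw [Finset.mem_filter]
      exact ⟨hδp, by rw [w.apply_symm_apply]; exact hδ.1⟩
    · intro β _; exact w.symm_apply_apply β
    · intro δ _; exact w.apply_symm_apply δ
    · intro β _; rfl
  have h2 : ∑ β ∈ Φpos.filter (fun β => ¬ w β ∈ Φpos), w β = ∑ δ ∈ I, (-δ) := by
    refine Finset.sum_nbij' (fun β => -(w β)) (fun δ => -(w.symm δ)) ?_ ?_ ?_ ?_ ?_
    · intro β hβ
      rw [Finset.mem_filter] at hβ
      have hβΦ : w β ∈ Φ := W.2.1 β (h.pos_subset hβ.1)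
      have hneg : -(w β) ∈ Φpos := (h.mem_or_neg_mem _ hβΦ).resolve_left hβ.2
      rw [hI, Finset.mem_filter]
      refine ⟨hneg, ?_⟩
      rw [map_neg, w.symm_apply_apply, neg_neg]
      exact hβ.1
    · intro δ hδ
      rw [hI, Finset.mem_filter] at hδ
      rw [Finset.mem_filter]
      refine ⟨hδ.2, ?_⟩
      rw [map_neg, w.apply_symm_apply]
      intro hmem
      exact h.not_mem_and_neg_mem δ hδ.1 hmem
    · intro β _; simp
    · intro δ _; simp
    · intro β _; simp
  have hsplit : ∑ β ∈ Φpos, w β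
      = ∑ δ ∈ Φpos \ I, δ + ∑ δ ∈ I, (-δ) := by
    rw [← h1, ← h2, Finset.sum_filter_add_sum_filter_not]
  have hsd : ∑ δ ∈ Φpos \ I, δ = ∑ δ ∈ Φpos, δ - ∑ δ ∈ I, δ :=
    Finset.sum_sdiff_eq_sub hIsub
  have hsum : ∑ β ∈ Φpos, w β
      = ∑ δ ∈ Φpos, δ - (∑ δ ∈ I, δ + ∑ δ ∈ I, δ) := by
    rw [hsplit, hsd, Finset.sum_neg_distrib]
    abel
  have hwρ : w ρ = (2⁻¹ : ℝ) • ∑ β ∈ Φpos, w β := by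
    rw [hρ, map_smul, map_sum]
  rw [hwρ, hρ, hsum]
  module

end Aux

open Classical in
/-- The key estimate: for `w ∈ W_P` and a simple root `α ∈ Δ^P`, `⟨wρ − ρ, α⟩ ≥ 0`. -/
lemma key_simple {Φ Δ Φpos : Finset V} (h : IsRootBase Φ Δ Φpos)
    {ΔP : Finset V} (hΔP : ΔP ⊆ Δ) {w : V ≃ₗ[ℝ] V}
    (hw : w ∈ minimalCosetReps Φ Φpos ΔP) {ρ : V}
    (hρ : ρ = (2⁻¹ : ℝ) • ∑ γ ∈ Φpos, γ) {α : V} (hα : α ∈ ΔP) :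
    0 ≤ ⟪w ρ - ρ, α⟫ := by
  classical
  have W := weyl_props Φ h.refl_mem hw.1
  have hαΔ : α ∈ Δ := hΔP hα
  have hαpos : α ∈ Φpos := h.base_subset_pos hαΔ
  have hαΦ : α ∈ Φ := h.pos_subset hαpos
  have hα0 : α ≠ 0 := fun e => h.zero_not_mem (e ▸ hαΦ)
  have hg : (0:ℝ) < ⟪α, α⟫ := root_inner_self_pos hα0
  have hαlevi : α ∈ levi Φ ΔP := ⟨hαΦ, Submodule.subset_span (Finset.mem_coe.mpr hα)⟩
  set I := Φpos.filter (fun δ => -(w.symm δ) ∈ Φpos) with hI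
  have hsum : w ρ - ρ = -∑ δ ∈ I, δ := wrho_sub_rho h hw.1 hρ
  rw [hsum, inner_neg_left, sum_inner, neg_nonneg]
  rw [← Finset.sum_filter_add_sum_filter_not I (fun δ => sRefl α δ ∈ I) (fun δ => ⟪δ, α⟫)]
  have hA : ∑ δ ∈ I.filter (fun δ => sRefl α δ ∈ I), ⟪δ, α⟫ = 0 := by
    refine Finset.sum_involution (fun δ _ => sRefl α δ) ?_ ?_ ?_ ?_
    · intro a ha
      show ⟪a, α⟫ + ⟪sRefl α a, α⟫ = 0
      rw [sRefl, inner_sub_left, real_inner_smul_left]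
      field_simp
      ring
    · intro a ha hfa heq
      apply hfa
      have h1 : (2 * ⟪a, α⟫ / ⟪α, α⟫) • α = 0 := by
        have h2 : a - (2 * ⟪a, α⟫ / ⟪α, α⟫) • α = a := heq
        exact sub_eq_self.mp h2
      have h3 : (2 * ⟪a, α⟫ / ⟪α, α⟫) = 0 := by
        rcases smul_eq_zero.mp h1 with hk | h0
        · exact hk
        · exact absurd h0 hα0
      have h4 : 2 * ⟪a, α⟫ = 0 := by
        rcases div_eq_zero_iff.mp h3 with h' | h'
        · exact h'
        · exact absurd h' (ne_of_gt hg)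
      linarith
    · intro a ha
      rw [Finset.mem_filter] at ha ⊢
      exact ⟨ha.2, by rw [sRefl_sRefl]; exact ha.1⟩
    · intro a ha
      exact sRefl_sRefl α a
  rw [hA, zero_add]
  refine Finset.sum_nonpos fun δ hδ => ?_
  rw [Finset.mem_filter] at hδ
  obtain ⟨hδI, hδs⟩ := hδ
  have hδI' := hδI
  rw [hI, Finset.mem_filter] at hδI'
  by_contra hpos
  push_neg at hpos
  have hδΦ : δ ∈ Φ := h.pos_subset hδI'.1
  have hδlevi : δ ∉ levi Φ ΔP := by
    intro hl
    have hmem : δ ∈ inversions Φpos w ∩ levi Φ ΔP := ⟨⟨hδI'.1, hδI'.2⟩, hl⟩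
    rw [hw.2] at hmem
    exact hmem
  obtain ⟨c, hc0, hcδ⟩ := h.pos_comb δ hδI'.1
  have hexists : ∃ β' ∈ Δ, β' ≠ α ∧ 0 < c β' := by
    by_contra hno
    push_neg at hno
    have hall : ∀ β' ∈ Δ, β' ≠ α → c β' = 0 := fun β' hβ' hne =>
      le_antisymm (hno β' hβ' hne) (hc0 β' hβ')
    have hδα : δ = c α • α := by
      rw [hcδ, Finset.sum_eq_single α]
      · intro b hb hne
        rw [hall b hb hne, zero_smul]
      · intro habs
        exact absurd hαΔ habs
    exact hδlevi ⟨hδΦ, hδα ▸ Submodule.smul_mem _ _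
      (Submodule.subset_span (Finset.mem_coe.mpr hα))⟩
  obtain ⟨β', hβ'Δ, hβ'ne, hβ'pos⟩ := hexists
  set k := 2 * ⟪δ, α⟫ / ⟪α, α⟫ with hk
  have hkpos : 0 < k := by
    rw [hk]
    exact div_pos (by linarith) hg
  have hsδ : sRefl α δ = δ - k • α := rfl
  have hsδΦ : sRefl α δ ∈ Φ := h.refl_mem α hαΦ δ hδΦ
  have hsδpos : sRefl α δ ∈ Φpos := by
    rcases h.mem_or_neg_mem _ hsδΦ with hp | hn
    · exact hp
    · exfalso
      obtain ⟨d, hd0, hdsum⟩ := h.pos_comb _ hn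
      have hc' : sRefl α δ = ∑ x ∈ Δ, (c x - (if x = α then k else 0)) • x := by
        rw [hsδ, hcδ]
        have hsplit : ∑ x ∈ Δ, (c x - (if x = α then k else 0)) • x
            = ∑ x ∈ Δ, c x • x - ∑ x ∈ Δ, (if x = α then k else 0) • x := by
          rw [← Finset.sum_sub_distrib]
          exact Finset.sum_congr rfl fun x _ => by rw [sub_smul]
        rw [hsplit]
        congr 1
        have hite : ∀ x ∈ Δ, (if x = α then k else 0) • x = (if x = α then k • α else 0) := by
          intro x hx
          split_ifs with hxa
          · rw [hxa]
          · rw [zero_smul]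
        rw [Finset.sum_congr rfl hite, Finset.sum_ite_eq' Δ α (fun _ => k • α), if_pos hαΔ]
      have hzero : ∑ x ∈ Δ, ((c x - (if x = α then k else 0)) + d x) • x = 0 := by
        have hsplit2 : ∑ x ∈ Δ, ((c x - (if x = α then k else 0)) + d x) • x
            = ∑ x ∈ Δ, (c x - (if x = α then k else 0)) • x + ∑ x ∈ Δ, d x • x := by
          rw [← Finset.sum_add_distrib]
          exact Finset.sum_congr rfl fun x _ => by rw [add_smul]
        rw [hsplit2, ← hc', ← hdsum]
        abel
      have hco := coeff_eq h.indep _ (fun _ => (0:ℝ))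
        (by rw [hzero]; simp) β' hβ'Δ
      rw [if_neg hβ'ne] at hco
      have hd := hd0 β' hβ'Δ
      simp only [sub_zero] at hco
      linarith
  have hsδnotI : ¬ (-(w.symm (sRefl α δ)) ∈ Φpos) := by
    intro hmem
    refine hδs ?_
    rw [hI, Finset.mem_filter]
    exact ⟨hsδpos, hmem⟩
  have hwsΦ : w.symm (sRefl α δ) ∈ Φ := W.2.2 _ hsδΦ
  have hwspos : w.symm (sRefl α δ) ∈ Φpos :=
    (h.mem_or_neg_mem _ hwsΦ).resolve_right hsδnotI
  have hβpos : w.symm α ∈ Φpos := symm_mem_pos h hw hαlevi hαpos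
  have hηneg : -(w.symm δ) ∈ Φpos := hδI'.2
  have hws : w.symm (sRefl α δ) = w.symm δ - k • w.symm α := by
    rw [hsδ, map_sub, map_smul]
  rw [hws] at hwspos
  obtain ⟨a, ha0, hasum⟩ := h.pos_comb _ hwspos
  obtain ⟨b, hb0, hbsum⟩ := h.pos_comb _ hηneg
  obtain ⟨e, he0, hesum⟩ := h.pos_comb _ hβpos
  have hzero2 : ∑ x ∈ Δ, (a x + b x + k * e x) • x = 0 := by
    have hstep : ∑ x ∈ Δ, (a x + b x + k * e x) • x
        = (∑ x ∈ Δ, a x • x) + (∑ x ∈ Δ, b x • x) + k • (∑ x ∈ Δ, e x • x) := by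
      rw [Finset.smul_sum, ← Finset.sum_add_distrib, ← Finset.sum_add_distrib]
      exact Finset.sum_congr rfl fun x _ => by rw [add_smul, add_smul, mul_smul]
    rw [hstep, ← hasum, ← hbsum, ← hesum]
    abel
  have heα : ∀ x ∈ Δ, e x = 0 := by
    intro x hx
    have h1 := coeffs_vanish h.indep _
      (fun y hy => add_nonneg (add_nonneg (ha0 y hy) (hb0 y hy))
        (mul_nonneg hkpos.le (he0 y hy))) hzero2 x hx
    have hke : k * e x = 0 := by
      have := ha0 x hx
      have := hb0 x hx
      have := mul_nonneg hkpos.le (he0 x hx)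
      linarith
    exact (mul_eq_zero.mp hke).resolve_left (ne_of_gt hkpos)
  have hβ0 : w.symm α = 0 := by
    rw [hesum]
    exact Finset.sum_eq_zero fun x hx => by rw [heα x hx, zero_smul]
  exact hα0 (by rw [← w.apply_symm_apply α, hβ0, map_zero])

/-- `⟨wρ − ρ, γ⟩ ≥ 0` for all positive roots `γ` of the Levi. -/
lemma key_levi {Φ Δ Φpos : Finset V} (h : IsRootBase Φ Δ Φpos)
    {ΔP : Finset V} (hΔP : ΔP ⊆ Δ) {w : V ≃ₗ[ℝ] V}
    (hw : w ∈ minimalCosetReps Φ Φpos ΔP) {ρ : V}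
    (hρ : ρ = (2⁻¹ : ℝ) • ∑ γ ∈ Φpos, γ) {γ : V}
    (hγl : γ ∈ levi Φ ΔP) (hγp : γ ∈ Φpos) :
    0 ≤ ⟪w ρ - ρ, γ⟫ := by
  classical
  obtain ⟨c, hc0, hcγ⟩ := h.pos_comb γ hγp
  obtain ⟨d, -, hdγ⟩ := Submodule.mem_span_finset.mp hγl.2
  have hvanish : ∀ x ∈ Δ, x ∉ ΔP → c x = 0 := by
    have hdext : ∑ x ∈ Δ, (if x ∈ ΔP then d x else 0) • x = γ := by
      rw [← Finset.sum_subset hΔP (fun x _ hnx => by rw [if_neg hnx, zero_smul])]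
      rw [← hdγ]
      exact Finset.sum_congr rfl fun x hx => by rw [if_pos hx]
    intro x hx hnx
    have hco := coeff_eq h.indep c (fun y => if y ∈ ΔP then d y else 0)
      (by rw [← hcγ, hdext]) x hx
    exact hco.trans (if_neg hnx)
  rw [hcγ, inner_sum]
  refine Finset.sum_nonneg fun x hx => ?_
  rw [real_inner_smul_right]
  by_cases hxP : x ∈ ΔP
  · exact mul_nonneg (hc0 x hx) (key_simple h hΔP hw hρ hxP)
  · rw [hvanish x hx hxP, zero_mul]

/-- key orthogonality claim in Lemma 11.4 of the paper.
For `λ` dominant, `w ∈ W_P` and `μ = w(λ+ρ) − ρ`: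
(i) `⟨wλ, γ∨⟩ ≥ 0`, `⟨wρ − ρ, γ∨⟩ ≥ 0` (hence `⟨μ, γ∨⟩ ≥ 0`) for every
`γ ∈ Φ^P ∩ Φ⁺`; and (ii) for `γ ∈ Φ^P`, `⟨μ, γ∨⟩ = 0` implies
`⟨wλ, γ∨⟩ = 0` and `⟨wρ − ρ, γ∨⟩ = 0`. -/
theorem orthogonalityOfKostantWeights
    {V : Type*} [NormedAddCommGroup V] [InnerProductSpace ℝ V] [FiniteDimensional ℝ V]
    (Φ Δ Φpos : Finset V) (h : IsRootBase Φ Δ Φpos)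
    (ΔP : Finset V) (hΔP : ΔP ⊆ Δ)
    (lam : V) (hdom : ∀ α ∈ Δ, 0 ≤ ⟪lam, coroot α⟫)
    (w : V ≃ₗ[ℝ] V) (hw : w ∈ minimalCosetReps Φ Φpos ΔP)
    (ρ : V) (hρ : ρ = (2⁻¹ : ℝ) • ∑ γ ∈ Φpos, γ)
    (μ : V) (hμ : μ = w (lam + ρ) - ρ) :
    (∀ γ ∈ levi Φ ΔP ∩ (Φpos : Set V),
        0 ≤ ⟪w lam, coroot γ⟫ ∧ 0 ≤ ⟪w ρ - ρ, coroot γ⟫ ∧ 0 ≤ ⟪μ, coroot γ⟫) ∧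
    (∀ γ ∈ levi Φ ΔP, ⟪μ, coroot γ⟫ = 0 →
        ⟪w lam, coroot γ⟫ = 0 ∧ ⟪w ρ - ρ, coroot γ⟫ = 0) := by
  classical
  have W := weyl_props Φ h.refl_mem hw.1
  have hμeq : ∀ γ : V, ⟪μ, coroot γ⟫ = ⟪w lam, coroot γ⟫ + ⟪w ρ - ρ, coroot γ⟫ := by
    intro γ
    rw [hμ, map_add, inner_sub_left, inner_add_left, inner_sub_left]
    ring
  have hpos_part : ∀ γ ∈ levi Φ ΔP ∩ (Φpos : Set V),
      0 ≤ ⟪w lam, coroot γ⟫ ∧ 0 ≤ ⟪w ρ - ρ, coroot γ⟫ ∧ 0 ≤ ⟪μ, coroot γ⟫ := by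
    rintro γ ⟨hγl, hγp⟩
    have hγp' : γ ∈ Φpos := hγp
    have hγΦ : γ ∈ Φ := h.pos_subset hγp'
    have hγ0 : γ ≠ 0 := fun e => h.zero_not_mem (e ▸ hγΦ)
    have hg : (0:ℝ) < ⟪γ, γ⟫ := root_inner_self_pos hγ0
    have h2g : (0:ℝ) ≤ 2 / ⟪γ, γ⟫ := by positivity
    have hlam : 0 ≤ ⟪w lam, coroot γ⟫ := by
      rw [coroot, real_inner_smul_right]
      refine mul_nonneg h2g ?_
      have hsymm : ⟪w lam, γ⟫ = ⟪lam, w.symm γ⟫ := by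
        conv_lhs => rw [← w.apply_symm_apply γ]
        exact W.1 lam (w.symm γ)
      rw [hsymm]
      exact inner_nonneg_of_pos h hdom (symm_mem_pos h hw hγl hγp')
    have hρnn : 0 ≤ ⟪w ρ - ρ, coroot γ⟫ := by
      rw [coroot, real_inner_smul_right]
      exact mul_nonneg h2g (key_levi h hΔP hw hρ hγl hγp')
    exact ⟨hlam, hρnn, by rw [hμeq γ]; linarith⟩
  refine ⟨hpos_part, ?_⟩
  intro γ hγl hμ0
  have hsum0 : ⟪w lam, coroot γ⟫ + ⟪w ρ - ρ, coroot γ⟫ = 0 := by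
    rw [← hμeq γ]
    exact hμ0
  rcases h.mem_or_neg_mem γ hγl.1 with hp | hn
  · have hi := hpos_part γ ⟨hγl, hp⟩
    exact ⟨by linarith [hi.1, hi.2.1], by linarith [hi.1, hi.2.1]⟩
  · have hγlneg : -γ ∈ levi Φ ΔP := ⟨h.pos_subset hn, neg_mem hγl.2⟩
    have hcor : coroot (-γ) = -coroot γ := by
      rw [coroot, coroot, inner_neg_neg, smul_neg]
    have hi := hpos_part (-γ) ⟨hγlneg, hn⟩
    have ha := hi.1
    have hb := hi.2.1
    rw [hcor, inner_neg_right] at ha hb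
    exact ⟨by linarith, by linarith⟩
end
end

section
/- Let S ⊆ Δ and let α, β ∈ Δ \ S be distinct. Then ⟨pr_S α, pr_S β⟩ ≠ 0 if and only if there exists a subset Ψ ⊆ S such that Ψ ∪ {α, β} is connected, where a finite set of vectors is called connected if the graph on it joining two vectors exactly when they are non-orthogonal is connected. -/
noncomputable section

open scoped RealInnerProductSpace

variable {V : Type*} [NormedAddCommGroup V] [InnerProductSpace ℝ V] [FiniteDimensional ℝ V]

/-- A finite set of vectors is connected if the graph on it joining two vectors
exactly when they are non-orthogonal is connected. -/
def nonOrthConnected {V : Type*} [NormedAddCommGroup V] [InnerProductSpace ℝ V]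
    (T : Set V) : Prop :=
  ∀ x ∈ T, ∀ y ∈ T, Relation.ReflTransGen (fun a b => a ∈ T ∧ b ∈ T ∧ ⟪a, b⟫ ≠ 0) x y

section AuxiliaryLemmas

set_option linter.unusedSectionVars false

variable {V : Type*} [NormedAddCommGroup V] [InnerProductSpace ℝ V] [FiniteDimensional ℝ V]

/-! ### Projection lemmas -/

lemma pr_mem_orthogonal (S : Set V) (v : V) : pr S v ∈ (Submodule.span ℝ S)ᗮ :=
  (Submodule.orthogonalProjectionOnto _ v).2

lemma sub_pr_mem (S : Set V) (v : V) : v - pr S v ∈ Submodule.span ℝ S := by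
  have := Submodule.sub_starProjection_mem_orthogonal (K := (Submodule.span ℝ S)ᗮ) v
  rwa [Submodule.orthogonal_orthogonal] at this

lemma pr_empty (v : V) : pr (∅ : Set V) v = v := by
  rw [pr, Submodule.coe_orthogonalProjectionOnto_apply, Submodule.starProjection_eq_self_iff.mpr]
  simp [Submodule.span_empty]

lemma pr_eq_zero_iff {S : Set V} {v : V} : pr S v = 0 ↔ v ∈ Submodule.span ℝ S := by
  rw [pr]
  rw [show ((Submodule.orthogonalProjectionOnto (Submodule.span ℝ S)ᗮ v : V) = 0 ↔
      Submodule.orthogonalProjectionOnto (Submodule.span ℝ S)ᗮ v = 0) from ZeroMemClass.coe_eq_zero]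
  rw [Submodule.orthogonalProjectionOnto_eq_zero_iff, Submodule.orthogonal_orthogonal]

lemma pr_insert {S : Set V} {γ : V} (hγ : pr S γ ≠ 0) (v : V) :
    pr (insert γ S) v = pr S v - (⟪pr S v, pr S γ⟫ / ⟪pr S γ, pr S γ⟫) • pr S γ := by
  have hgg : ⟪pr S γ, pr S γ⟫ ≠ 0 := inner_self_ne_zero.mpr hγ
  set c : ℝ := ⟪pr S v, pr S γ⟫ / ⟪pr S γ, pr S γ⟫ with hc
  set w : V := pr S v - c • pr S γ with hw
  have hwS : w ∈ (Submodule.span ℝ S)ᗮ :=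
    Submodule.sub_mem _ (pr_mem_orthogonal S v)
      (Submodule.smul_mem _ _ (pr_mem_orthogonal S γ))
  have hwK : w ∈ (Submodule.span ℝ (insert γ S))ᗮ := by
    rw [Submodule.mem_orthogonal]
    intro u hu
    induction hu using Submodule.span_induction with
    | mem x hx =>
      rcases hx with rfl | hxS
      · have h1 : ⟪x - pr S x, w⟫ = 0 := by
          rw [Submodule.mem_orthogonal] at hwS
          exact hwS _ (sub_pr_mem S x)
        have h2 : ⟪pr S x, w⟫ = 0 := by
          rw [hw, inner_sub_right, real_inner_smul_right, hc]
          field_simp [real_inner_comm (pr S v) (pr S x)]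
          rw [real_inner_comm (pr S v) (pr S x), sub_self]
        calc ⟪x, w⟫ = ⟪x - pr S x, w⟫ + ⟪pr S x, w⟫ := by
              rw [← inner_add_left]; rw [sub_add_cancel]
        _ = 0 := by rw [h1, h2, add_zero]
      · rw [Submodule.mem_orthogonal] at hwS
        exact hwS _ (Submodule.subset_span hxS)
    | zero => exact inner_zero_left _
    | add x y _ _ hx hy => rw [inner_add_left, hx, hy, add_zero]
    | smul a x _ hx => rw [real_inner_smul_left, hx, mul_zero]
  have hvw : v - w ∈ Submodule.span ℝ (insert γ S) := by
    have h1 : v - pr S v ∈ Submodule.span ℝ (insert γ S) :=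
      Submodule.span_mono (Set.subset_insert γ S) (sub_pr_mem S v)
    have h2 : pr S γ ∈ Submodule.span ℝ (insert γ S) := by
      have hγmem : γ ∈ Submodule.span ℝ (insert γ S) :=
        Submodule.subset_span (Set.mem_insert γ S)
      have heq : pr S γ = γ - (γ - pr S γ) := by abel
      rw [heq]
      exact Submodule.sub_mem _ hγmem
        (Submodule.span_mono (Set.subset_insert γ S) (sub_pr_mem S γ))
    have heq : v - w = (v - pr S v) + c • pr S γ := by rw [hw]; abel
    rw [heq]
    exact Submodule.add_mem _ h1 (Submodule.smul_mem _ _ h2)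
  exact Submodule.eq_starProjection_of_mem_of_inner_eq_zero hwK (fun z hz => hz (v - w) hvw)

lemma pr_inner_insert {S : Set V} {γ : V} (hγ : pr S γ ≠ 0) (x y : V) :
    ⟪pr (insert γ S) x, pr (insert γ S) y⟫ =
      ⟪pr S x, pr S y⟫ - ⟪pr S x, pr S γ⟫ * ⟪pr S γ, pr S y⟫ / ⟪pr S γ, pr S γ⟫ := by
  have hgg : ⟪pr S γ, pr S γ⟫ ≠ 0 := inner_self_ne_zero.mpr hγ
  rw [pr_insert hγ x, pr_insert hγ y]
  rw [inner_sub_left, inner_sub_right, inner_sub_right, real_inner_smul_left,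
    real_inner_smul_left, real_inner_smul_right, real_inner_smul_right,
    real_inner_comm (pr S γ) (pr S x), real_inner_comm (pr S γ) (pr S y)]
  field_simp
  ring

/-! ### Root base lemmas -/

lemma coeffs_eq_zero {Φ Δ Φpos : Finset V} (h : IsRootBase Φ Δ Φpos)
    (f : V → ℝ) (hf : ∑ δ ∈ Δ, f δ • δ = 0) : ∀ δ ∈ Δ, f δ = 0 := by
  classical
  intro δ hδ
  have hsum : ∑ x ∈ Δ.attach, f ↑x • (x : V) = 0 := by
    rw [Finset.sum_attach Δ (fun y => f y • y)]; exact hf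
  exact linearIndependent_iff'.mp h.indep Δ.attach (fun x => f ↑x) hsum ⟨δ, hδ⟩
    (Finset.mem_attach _ _)

lemma base_inner_nonpos {Φ Δ Φpos : Finset V} (h : IsRootBase Φ Δ Φpos)
    {α β : V} (hα : α ∈ Δ) (hβ : β ∈ Δ) (hne : α ≠ β) : ⟪α, β⟫ ≤ 0 := by
  classical
  by_contra hpos
  push_neg at hpos
  have hαΦ : α ∈ Φ := h.pos_subset (h.base_subset_pos hα)
  have hβΦ : β ∈ Φ := h.pos_subset (h.base_subset_pos hβ)
  have hα0 : α ≠ 0 := fun e => h.zero_not_mem (e ▸ hαΦ)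
  have haa : (0:ℝ) < ⟪α, α⟫ :=
    lt_of_le_of_ne real_inner_self_nonneg (Ne.symm (inner_self_ne_zero.mpr hα0))
  set c : ℝ := 2 * ⟪β, α⟫ / ⟪α, α⟫ with hc
  have hcpos : 0 < c := by
    apply div_pos _ haa
    rw [real_inner_comm]
    linarith
  have hγΦ : β - c • α ∈ Φ := h.refl_mem α hαΦ β hβΦ
  have hite : ∀ (a : V) (t : ℝ), a ∈ Δ → ∑ x ∈ Δ, (if x = a then t else 0) • x = t • a := by
    intro a t ha
    rw [Finset.sum_congr rfl
      (fun x _ => (by split <;> simp : (if x = a then t else 0) • x = if x = a then t • x else 0))]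
    rw [Finset.sum_ite_eq' Δ a (fun x => t • x)]
    simp [ha]
  rcases h.mem_or_neg_mem _ hγΦ with hγp | hγn
  · obtain ⟨cf, hcf0, hcfsum⟩ := h.pos_comb _ hγp
    have key : ∑ x ∈ Δ, (cf x + (if x = α then c else 0) - (if x = β then 1 else 0)) • x = 0 := by
      simp only [add_smul, sub_smul, Finset.sum_sub_distrib, Finset.sum_add_distrib]
      rw [hite α c hα, hite β 1 hβ, ← hcfsum]
      simp only [one_smul]
      abel
    have hcoef := coeffs_eq_zero h _ key α hα
    simp [hne] at hcoef
    have := hcf0 α hα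
    linarith
  · obtain ⟨cf, hcf0, hcfsum⟩ := h.pos_comb _ hγn
    have hneg : -(β - c • α) = c • α - β := by abel
    rw [hneg] at hcfsum
    have key : ∑ x ∈ Δ, (cf x - (if x = α then c else 0) + (if x = β then 1 else 0)) • x = 0 := by
      simp only [add_smul, sub_smul, Finset.sum_sub_distrib, Finset.sum_add_distrib]
      rw [hite α c hα, hite β 1 hβ, ← hcfsum]
      simp only [one_smul]
      abel
    have hcoef := coeffs_eq_zero h _ key β hβ
    simp [Ne.symm hne] at hcoef
    have := hcf0 β hβ
    linarith

lemma pr_ne_zero {Φ Δ Φpos : Finset V} (h : IsRootBase Φ Δ Φpos)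
    {S : Set V} (hS : S ⊆ (Δ : Set V)) {γ : V} (hγΔ : γ ∈ (Δ : Set V)) (hγS : γ ∉ S) :
    pr S γ ≠ 0 := by
  intro h0
  rw [pr_eq_zero_iff] at h0
  have himg : (fun x : (Δ : Set V) => (x : V)) '' {x : (Δ : Set V) | (x : V) ∈ S} = S := by
    ext y
    constructor
    · rintro ⟨⟨z, hz⟩, hz2, rfl⟩
      exact hz2
    · intro hy
      exact ⟨⟨y, hS hy⟩, hy, rfl⟩
  have hnot := h.indep.notMem_span_image (s := {x : (Δ : Set V) | (x : V) ∈ S})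
    (x := ⟨γ, hγΔ⟩) hγS
  rw [himg] at hnot
  exact hnot h0

/-! ### Chain lemmas -/

/-- A chain from `α` to `β` whose interior vertices lie in `S`, with consecutive
vertices non-orthogonal. -/
def chainW (S : Set V) (α β : V) : Prop :=
  ∃ l : List V, (∀ x ∈ l, x ∈ S) ∧ List.Chain (fun a b : V => ⟪a, b⟫ ≠ 0) α (l ++ [β])

lemma chainW_mono {S T : Set V} (hST : S ⊆ T) {α β : V} (h : chainW S α β) :
    chainW T α β := by
  obtain ⟨l, hl, hc⟩ := h
  exact ⟨l, fun x hx => hST (hl x hx), hc⟩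

lemma chainW_split {S : Set V} {γ α β : V} (h : chainW (insert γ S) α β) :
    chainW S α β ∨ (chainW S α γ ∧ chainW S γ β) := by
  obtain ⟨l, hl, hc⟩ := h
  have main : ∀ l : List V, (∀ x ∈ l, x ∈ insert γ S) → ∀ a : V,
      List.Chain (fun a b : V => ⟪a, b⟫ ≠ 0) a (l ++ [β]) →
      chainW S a β ∨ (chainW S a γ ∧ chainW S γ β) := by
    intro l
    induction l with
    | nil =>
      intro _ a hc
      exact Or.inl ⟨[], by simp, hc⟩
    | cons x t ih =>
      intro hmem a hc
      rw [List.cons_append] at hc; unfold List.Chain at hc; rw [List.chain_cons] at hc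
      obtain ⟨hax, hct⟩ := hc
      have hxm : x ∈ insert γ S := hmem x List.mem_cons_self
      have hmem' : ∀ y ∈ t, y ∈ insert γ S := fun y hy => hmem y (List.mem_cons_of_mem x hy)
      rcases hxm with rfl | hxS
      · rcases ih hmem' x hct with h1 | h2
        · exact Or.inr ⟨⟨[], by simp, List.Chain.cons hax List.Chain.nil⟩, h1⟩
        · exact Or.inr ⟨⟨[], by simp, List.Chain.cons hax List.Chain.nil⟩, h2.2⟩
      · rcases ih hmem' x hct with h1 | h2
        · obtain ⟨m, hm, hcm⟩ := h1
          refine Or.inl ⟨x :: m, ?_, ?_⟩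
          · intro y hy; rcases List.mem_cons.mp hy with rfl | hy'
            · exact hxS
            · exact hm y hy'
          · rw [List.cons_append]; unfold List.Chain; rw [List.chain_cons]; exact ⟨hax, hcm⟩
        · obtain ⟨⟨m, hm, hcm⟩, h3⟩ := h2
          refine Or.inr ⟨⟨x :: m, ?_, ?_⟩, h3⟩
          · intro y hy; rcases List.mem_cons.mp hy with rfl | hy'
            · exact hxS
            · exact hm y hy'
          · rw [List.cons_append]; unfold List.Chain; rw [List.chain_cons]; exact ⟨hax, hcm⟩
  exact main l hl α hc

lemma chainW_insert_of {S : Set V} {γ α β : V}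
    (h : chainW S α β ∨ (chainW S α γ ∧ chainW S γ β)) :
    chainW (insert γ S) α β := by
  rcases h with h | ⟨⟨l₁, hl₁, hc₁⟩, ⟨l₂, hl₂, hc₂⟩⟩
  · exact chainW_mono (Set.subset_insert γ S) h
  · refine ⟨l₁ ++ γ :: l₂, ?_, ?_⟩
    · intro y hy
      rcases List.mem_append.mp hy with hy' | hy'
      · exact Set.mem_insert_of_mem _ (hl₁ y hy')
      · rcases List.mem_cons.mp hy' with rfl | hy''
        · exact Set.mem_insert _ _
        · exact Set.mem_insert_of_mem _ (hl₂ y hy'')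
    · have heq : (l₁ ++ γ :: l₂) ++ [β] = l₁ ++ γ :: (l₂ ++ [β]) := by simp
      rw [heq]; unfold List.Chain; rw [List.isChain_cons_split]
      exact ⟨hc₁, hc₂⟩

end AuxiliaryLemmas

section MainLemmas

set_option linter.unusedSectionVars false

variable {V : Type*} [NormedAddCommGroup V] [InnerProductSpace ℝ V] [FiniteDimensional ℝ V]

lemma key_ind {Φ Δ Φpos : Finset V} (h : IsRootBase Φ Δ Φpos) :
    ∀ S : Finset V, ↑S ⊆ (Δ : Set V) →
      ∀ α β : V, α ∈ (Δ : Set V) → β ∈ (Δ : Set V) → α ∉ S → β ∉ S → α ≠ β →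
        ⟪pr (↑S) α, pr (↑S) β⟫ ≤ 0 ∧ (⟪pr (↑S) α, pr (↑S) β⟫ ≠ 0 ↔ chainW (↑S) α β) := by
  classical
  intro S
  induction S using Finset.induction_on with
  | empty =>
    intro _ α β hα hβ _ _ hne
    rw [Finset.coe_empty, pr_empty, pr_empty]
    refine ⟨base_inner_nonpos h hα hβ hne, ?_, ?_⟩
    · intro h0
      refine ⟨[], by simp, ?_⟩
      exact List.Chain.cons h0 List.Chain.nil
    · rintro ⟨l, hl, hc⟩
      cases l with
      | nil => simpa [List.Chain] using hc
      | cons x t => exact absurd (hl x (by simp)) (Set.notMem_empty x)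
  | @insert γ S' hγ ih =>
    intro hsub α β hαΔ hβΔ hαS hβS hne
    have hγΔ : γ ∈ (Δ : Set V) := hsub (by simp)
    have hS'sub : ↑S' ⊆ (Δ : Set V) := fun x hx =>
      hsub (by simp only [Finset.coe_insert, Set.mem_insert_iff]; exact Or.inr hx)
    have hαS' : α ∉ S' := fun hx => hαS (Finset.mem_insert_of_mem hx)
    have hβS' : β ∉ S' := fun hx => hβS (Finset.mem_insert_of_mem hx)
    have hαγ : α ≠ γ := fun e => hαS (e ▸ Finset.mem_insert_self γ S')
    have hβγ : β ≠ γ := fun e => hβS (e ▸ Finset.mem_insert_self γ S')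
    obtain ⟨hAle, hAiff⟩ := ih hS'sub α β hαΔ hβΔ hαS' hβS' hne
    obtain ⟨hBle, hBiff⟩ := ih hS'sub α γ hαΔ hγΔ hαS' hγ hαγ
    obtain ⟨hCle, hCiff⟩ := ih hS'sub γ β hγΔ hβΔ hγ hβS' (Ne.symm hβγ)
    have hprγ : pr (↑S') γ ≠ 0 := pr_ne_zero h hS'sub hγΔ (by simpa using hγ)
    have hD : (0:ℝ) < ⟪pr (↑S') γ, pr (↑S') γ⟫ :=
      lt_of_le_of_ne real_inner_self_nonneg (Ne.symm (inner_self_ne_zero.mpr hprγ))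
    rw [Finset.coe_insert, pr_inner_insert hprγ α β]
    set A : ℝ := ⟪pr (↑S') α, pr (↑S') β⟫ with hA
    set B : ℝ := ⟪pr (↑S') α, pr (↑S') γ⟫ with hB
    set C : ℝ := ⟪pr (↑S') γ, pr (↑S') β⟫ with hC
    set D : ℝ := ⟪pr (↑S') γ, pr (↑S') γ⟫ with hDdef
    have hBC : 0 ≤ B * C := by nlinarith
    have hBCD : 0 ≤ B * C / D := div_nonneg hBC hD.le
    constructor
    · linarith
    · have hiff2 : chainW (insert γ (↑S' : Set V)) α β ↔
          chainW (↑S') α β ∨ (chainW (↑S') α γ ∧ chainW (↑S') γ β) :=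
        ⟨chainW_split, chainW_insert_of⟩
      rw [hiff2, ← hAiff, ← hBiff, ← hCiff]
      constructor
      · intro h0
        by_contra hcon
        push_neg at hcon
        obtain ⟨hA0, hBC0⟩ := hcon
        apply h0
        rcases eq_or_ne B 0 with hB0 | hB0
        · rw [hA0, hB0]; simp
        · rw [hA0, hBC0 hB0]; simp
      · intro hor heq
        rcases hor with hA0 | ⟨hB0, hC0⟩
        · have hAlt : A < 0 := lt_of_le_of_ne hAle hA0
          linarith
        · have hBlt : B < 0 := lt_of_le_of_ne hBle hB0
          have hClt : C < 0 := lt_of_le_of_ne hCle hC0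
          have : 0 < B * C / D := div_pos (mul_pos_of_neg_of_neg hBlt hClt) hD
          linarith

lemma chainW_iff_exists_conn {S : Set V} {α β : V} (hne : α ≠ β) :
    chainW S α β ↔ ∃ Ψ : Set V, Ψ ⊆ S ∧ nonOrthConnected (Ψ ∪ {α, β}) := by
  constructor
  · rintro ⟨l, hl, hc⟩
    refine ⟨{x | x ∈ l}, fun x hx => hl x hx, ?_⟩
    set T : Set V := {x | x ∈ l} ∪ {α, β} with hT
    set R : V → V → Prop := fun a b => a ∈ T ∧ b ∈ T ∧ ⟪a, b⟫ ≠ 0 with hR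
    have hαT : α ∈ T := Or.inr (by simp)
    have hβT : β ∈ T := Or.inr (by simp)
    have reach : ∀ (m : List V), (∀ x ∈ m, x ∈ T) → ∀ a, a ∈ T →
        List.Chain (fun a b : V => ⟪a, b⟫ ≠ 0) a (m ++ [β]) →
        ∀ x, x = a ∨ x ∈ m ∨ x = β → Relation.ReflTransGen R a x := by
      intro m
      induction m with
      | nil =>
        intro _ a haT hc x hx
        rcases hx with rfl | hx | rfl
        · exact Relation.ReflTransGen.refl
        · simp at hx
        · have hiab : ⟪a, x⟫ ≠ 0 := by simpa [List.Chain] using hc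
          exact Relation.ReflTransGen.single ⟨haT, hβT, hiab⟩
      | cons z t iht =>
        intro hm a haT hc x hx
        rw [List.cons_append] at hc; unfold List.Chain at hc; rw [List.chain_cons] at hc
        have hzT : z ∈ T := hm z List.mem_cons_self
        have hmt : ∀ y ∈ t, y ∈ T := fun y hy => hm y (List.mem_cons_of_mem z hy)
        have step : Relation.ReflTransGen R a z :=
          Relation.ReflTransGen.single ⟨haT, hzT, hc.1⟩
        rcases hx with rfl | hx | rfl
        · exact Relation.ReflTransGen.refl
        · rcases List.mem_cons.mp hx with rfl | hx'
          · exact step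
          · exact step.trans (iht hmt z hzT hc.2 x (Or.inr (Or.inl hx')))
        · exact step.trans (iht hmt z hzT hc.2 x (Or.inr (Or.inr rfl)))
    intro x hx y hy
    have hmemT : ∀ z, z ∈ T → z = α ∨ z ∈ l ∨ z = β := by
      intro z hz
      rcases hz with hz | hz
      · exact Or.inr (Or.inl hz)
      · rcases hz with rfl | hz
        · exact Or.inl rfl
        · exact Or.inr (Or.inr (by simpa using hz))
    have hlT : ∀ x ∈ l, x ∈ T := fun x hx => Or.inl hx
    have h1 := reach l hlT α hαT hc x (hmemT x hx)
    have h2 := reach l hlT α hαT hc y (hmemT y hy)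
    have hsym : Symmetric R := fun a b hab =>
      ⟨hab.2.1, hab.1, by rw [real_inner_comm]; exact hab.2.2⟩
    exact (haveI : Std.Symm R := ⟨fun a b hab => hsym hab⟩; Std.Symm.symm (r := Relation.ReflTransGen R) _ _ h1).trans h2
  · rintro ⟨Ψ, hΨ, hconn⟩
    have hαT : α ∈ Ψ ∪ {α, β} := Or.inr (by simp)
    have hβT : β ∈ Ψ ∪ {α, β} := Or.inr (by simp)
    have hrt := hconn α hαT β hβT
    obtain ⟨l, hcl, hlast⟩ := List.exists_isChain_cons_of_relationReflTransGen hrt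
    have hlT : ∀ x ∈ l, x ∈ Ψ ∪ {α, β} := by
      have main : ∀ (m : List V) (a : V),
          List.Chain (fun a b : V => a ∈ Ψ ∪ {α, β} ∧ b ∈ Ψ ∪ {α, β} ∧ ⟪a, b⟫ ≠ 0) a m →
          ∀ x ∈ m, x ∈ Ψ ∪ {α, β} := by
        intro m
        induction m with
        | nil => intro a _ x hx; simp at hx
        | cons z t iht =>
          intro a hc x hx
          unfold List.Chain at hc; rw [List.chain_cons] at hc
          rcases List.mem_cons.mp hx with rfl | hx'
          · exact hc.1.2.1
          · exact iht z hc.2 x hx'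
      exact main l α hcl
    have hlne : l ≠ [] := by
      rintro rfl
      exact hne (by simpa using hlast)
    have hgl : l.getLast hlne = β := by
      rw [← hlast, List.getLast_cons hlne]
    obtain ⟨m, rfl⟩ : ∃ m, l = m ++ [β] :=
      ⟨l.dropLast, by conv_lhs => rw [← List.dropLast_append_getLast hlne, hgl]⟩
    have hcE : List.Chain (fun a b : V => ⟪a, b⟫ ≠ 0) α (m ++ [β]) :=
      List.Chain.imp (fun a b hab => hab.2.2) hcl
    have hTins : Ψ ∪ {α, β} = insert α (insert β Ψ) := by
      ext z
      simp only [Set.mem_union, Set.mem_insert_iff, Set.mem_singleton_iff]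
      tauto
    have hch1 : chainW (insert α (insert β Ψ)) α β :=
      ⟨m, fun x hx => hTins ▸ hlT x (List.mem_append_left _ hx), hcE⟩
    have hch2 : chainW (insert β Ψ) α β := by
      rcases chainW_split hch1 with h1 | h2
      · exact h1
      · exact h2.2
    have hch3 : chainW Ψ α β := by
      rcases chainW_split hch2 with h1 | h2
      · exact h1
      · exact h2.1
    exact chainW_mono hΨ hch3

end MainLemmas

/-- combinatorial fact in the proof of Lemma 20.1 of the paper.
For `S ⊆ Δ` and distinct `α, β ∈ Δ \ S`: `⟨pr_S α, pr_S β⟩ ≠ 0` iff there is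
`Ψ ⊆ S` with `Ψ ∪ {α, β}` connected for the non-orthogonality graph. -/
theorem restrictedRootsPairing
    {V : Type*} [NormedAddCommGroup V] [InnerProductSpace ℝ V] [FiniteDimensional ℝ V]
    (Φ Δ Φpos : Finset V) (h : IsRootBase Φ Δ Φpos)
    (S : Set V) (hS : S ⊆ (Δ : Set V))
    (α β : V) (hα : α ∈ (Δ : Set V) \ S) (hβ : β ∈ (Δ : Set V) \ S) (hαβ : α ≠ β) :
    ⟪pr S α, pr S β⟫ ≠ 0 ↔ ∃ Ψ : Set V, Ψ ⊆ S ∧ nonOrthConnected (Ψ ∪ {α, β}) := by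
  have hSfin : S.Finite := Set.Finite.subset Δ.finite_toSet hS
  obtain ⟨hle, hiff⟩ := key_ind h hSfin.toFinset
    (by rw [Set.Finite.coe_toFinset]; exact hS) α β hα.1 hβ.1
    (by rw [Set.Finite.mem_toFinset]; exact hα.2)
    (by rw [Set.Finite.mem_toFinset]; exact hβ.2) hαβ
  rw [Set.Finite.coe_toFinset] at hiff
  rw [hiff, chainW_iff_exists_conn hαβ]
end
end

section
/- Let S ⊆ S′ ⊆ Δ satisfy ω(S) ∩ S′ = S. Then: (a) ω(S′) ⊆ ω(S) ∪ S′; (b) for every α ∈ ω(S′) \ S′, the orthogonal projections of α onto the orthogonal complement of span(S) and onto the orthogonal complement of span(S′) coincide, i.e. pr_S α = pr_{S′} α; and (c) consequently ⟨λ, pr_{S′}(α∨)⟩ = ⟨λ, pr_S(α∨)⟩ for every λ ∈ V and every α ∈ ω(S′) \ S′. -/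
noncomputable section

open scoped RealInnerProductSpace

variable {V : Type*} [NormedAddCommGroup V] [InnerProductSpace ℝ V] [FiniteDimensional ℝ V]

/-- `Θ` is σ-connected (relative to the highest weight `μ₀`): the non-orthogonality
graph on `Θ ∪ {μ₀}` is connected. -/
def sigmaConn {V : Type*} [NormedAddCommGroup V] [InnerProductSpace ℝ V]
    (μ₀ : V) (Θ : Set V) : Prop :=
  nonOrthConnected (insert μ₀ Θ)

/-- `κ(Θ)`: the union of all σ-connected subsets of `Θ`
(the largest σ-connected subset of `Θ`). -/
def kap {V : Type*} [NormedAddCommGroup V] [InnerProductSpace ℝ V]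
    (μ₀ : V) (Θ : Set V) : Set V :=
  ⋃₀ {Υ : Set V | Υ ⊆ Θ ∧ sigmaConn μ₀ Υ}

/-- `ω(Θ)`: the union of all `Υ ⊆ Δ` with `κ(Υ) = κ(Θ)` (the largest such subset). -/
def om {V : Type*} [NormedAddCommGroup V] [InnerProductSpace ℝ V]
    (μ₀ : V) (Δ : Finset V) (Θ : Set V) : Set V :=
  ⋃₀ {Υ : Set V | Υ ⊆ (Δ : Set V) ∧ kap μ₀ Υ = kap μ₀ Θ}

section AuxLemmas

variable {V : Type*} [NormedAddCommGroup V] [InnerProductSpace ℝ V]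

/-- The non-orthogonality edge relation on a set `T`. -/
def edg (T : Set V) (a b : V) : Prop := a ∈ T ∧ b ∈ T ∧ ⟪a, b⟫ ≠ 0

lemma edg_symm (T : Set V) : Symmetric (edg T) := by
  rintro a b ⟨ha, hb, h⟩
  exact ⟨hb, ha, by rwa [real_inner_comm]⟩

lemma edg_mono {T T' : Set V} (h : T ⊆ T') {a b : V} (hab : edg T a b) : edg T' a b :=
  ⟨h hab.1, h hab.2.1, hab.2.2⟩

lemma rtg_symm {T : Set V} {x y : V} (h : Relation.ReflTransGen (edg T) x y) :
    Relation.ReflTransGen (edg T) y x :=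
  by haveI : Std.Symm (edg T) := ⟨edg_symm T⟩; exact Std.Symm.symm _ _ h

lemma mem_kap_iff {μ₀ x : V} {Θ : Set V} :
    x ∈ kap μ₀ Θ ↔ x ∈ Θ ∧ Relation.ReflTransGen (edg (insert μ₀ Θ)) x μ₀ := by
  constructor
  · rintro ⟨Υ, ⟨hΥΘ, hconn⟩, hxΥ⟩
    refine ⟨hΥΘ hxΥ, ?_⟩
    have h := hconn x (Set.mem_insert_of_mem _ hxΥ) μ₀ (Set.mem_insert _ _)
    exact Relation.ReflTransGen.mono (fun a b hab => edg_mono (Set.insert_subset_insert hΥΘ) hab) _ _ h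
  · rintro ⟨hxΘ, hpath⟩
    set Υ : Set V := {y | y ∈ Θ ∧ Relation.ReflTransGen (edg (insert μ₀ Θ)) y μ₀} with hΥdef
    have key : ∀ z, Relation.ReflTransGen (edg (insert μ₀ Θ)) z μ₀ →
        Relation.ReflTransGen (edg (insert μ₀ Υ)) z μ₀ := by
      intro z hz
      induction hz using Relation.ReflTransGen.head_induction_on with
      | refl => exact .refl
      | @head a c h' h ih =>
        have hmem : ∀ w ∈ insert μ₀ Θ, Relation.ReflTransGen (edg (insert μ₀ Θ)) w μ₀ →
            w ∈ insert μ₀ Υ := by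
          rintro w (rfl | hw) hwp
          · exact Set.mem_insert _ _
          · exact Set.mem_insert_of_mem _ ⟨hw, hwp⟩
        exact .head ⟨hmem a h'.1 (.head h' h), hmem c h'.2.1 h, h'.2.2⟩ ih
    have hto : ∀ a ∈ insert μ₀ Υ, Relation.ReflTransGen (edg (insert μ₀ Υ)) a μ₀ := by
      rintro a (rfl | ha)
      · exact .refl
      · exact key a ha.2
    refine Set.mem_sUnion.mpr ⟨Υ, ⟨fun y hy => hy.1, ?_⟩, ⟨hxΘ, hpath⟩⟩
    intro a ha b hb
    exact (hto a ha).trans (rtg_symm (hto b hb))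

lemma kap_subset (μ₀ : V) (Θ : Set V) : kap μ₀ Θ ⊆ Θ :=
  Set.sUnion_subset fun _ hΥ => hΥ.1

lemma kap_mono {μ₀ : V} {Θ Θ' : Set V} (h : Θ ⊆ Θ') : kap μ₀ Θ ⊆ kap μ₀ Θ' :=
  Set.sUnion_subset fun Υ hΥ => Set.subset_sUnion_of_mem ⟨hΥ.1.trans h, hΥ.2⟩

/-- If `α ∈ Υ` is non-orthogonal to a member of `{μ₀} ∪ kap μ₀ Υ`, then `α ∈ kap μ₀ Υ`. -/
lemma absorb {μ₀ α v : V} {Υ : Set V} (hα : α ∈ Υ) (hv : v ∈ insert μ₀ (kap μ₀ Υ))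
    (hne : ⟪α, v⟫ ≠ 0) : α ∈ kap μ₀ Υ := by
  have hvpath : Relation.ReflTransGen (edg (insert μ₀ Υ)) v μ₀ := by
    rcases hv with rfl | hv
    · exact .refl
    · exact (mem_kap_iff.mp hv).2
  have hvmem : v ∈ insert μ₀ Υ := by
    rcases hv with rfl | hv
    · exact Set.mem_insert _ _
    · exact Set.mem_insert_of_mem _ (kap_subset μ₀ Υ hv)
  exact mem_kap_iff.mpr ⟨hα, .head ⟨Set.mem_insert_of_mem _ hα, hvmem, hne⟩ hvpath⟩

/-- If `α` is orthogonal to `{μ₀} ∪ kap μ₀ Θ`, then adding `α` does not change `kap`. -/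
lemma kap_insert_of_orth {μ₀ α : V} {Θ : Set V} (hμ₀ : μ₀ ≠ 0)
    (horth : ∀ v ∈ insert μ₀ (kap μ₀ Θ), ⟪α, v⟫ = 0) :
    kap μ₀ (insert α Θ) = kap μ₀ Θ := by
  refine Set.Subset.antisymm ?_ (kap_mono (Set.subset_insert _ _))
  intro x hx
  obtain ⟨hxmem, hpath⟩ := mem_kap_iff.mp hx
  have hrev : Relation.ReflTransGen (edg (insert μ₀ (insert α Θ))) μ₀ x := rtg_symm hpath
  have key : ∀ z, Relation.ReflTransGen (edg (insert μ₀ (insert α Θ))) μ₀ z →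
      z ∈ insert μ₀ (kap μ₀ Θ) := by
    intro z hz
    induction hz with
    | refl => exact Set.mem_insert _ _
    | @tail b c hb hedge ih =>
      rcases hedge.2.1 with rfl | hc
      · exact Set.mem_insert _ _
      · rcases hc with rfl | hcΘ
        · exact absurd (horth b ih) (fun h0 => hedge.2.2 (by rwa [real_inner_comm]))
        · -- c ∈ Θ, adjacent to b ∈ insert μ₀ (kap μ₀ Θ)
          have hbpath : Relation.ReflTransGen (edg (insert μ₀ Θ)) b μ₀ := by
            rcases ih with rfl | hb'
            · exact .refl
            · exact (mem_kap_iff.mp hb').2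
          have hbmem : b ∈ insert μ₀ Θ := by
            rcases ih with rfl | hb'
            · exact Set.mem_insert _ _
            · exact Set.mem_insert_of_mem _ (kap_subset μ₀ Θ hb')
          refine Set.mem_insert_of_mem _ (mem_kap_iff.mpr ⟨hcΘ, .head ?_ hbpath⟩)
          exact ⟨Set.mem_insert_of_mem _ hcΘ, hbmem, fun h0 => hedge.2.2 (by rwa [real_inner_comm])⟩
  rcases key x hrev with rfl | hk
  · -- x = μ₀ ∈ insert α Θ
    rcases hxmem with rfl | hxΘ
    · exfalso
      have := horth x (Set.mem_insert _ _)
      exact hμ₀ (inner_self_eq_zero.mp this)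
    · exact mem_kap_iff.mpr ⟨hxΘ, .refl⟩
  · exact hk

lemma mem_om_iff {μ₀ x : V} {Δ : Finset V} {Θ : Set V} :
    x ∈ om μ₀ Δ Θ ↔ ∃ Υ : Set V, Υ ⊆ (Δ : Set V) ∧ kap μ₀ Υ = kap μ₀ Θ ∧ x ∈ Υ := by
  constructor
  · rintro ⟨Υ, ⟨h1, h2⟩, h3⟩; exact ⟨Υ, h1, h2, h3⟩
  · rintro ⟨Υ, h1, h2, h3⟩; exact Set.mem_sUnion.mpr ⟨Υ, ⟨h1, h2⟩, h3⟩

end AuxLemmas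

omit [FiniteDimensional ℝ V] in
lemma span_orth_of_forall {s : Set V} {u : V} (h : ∀ w ∈ s, ⟪w, u⟫ = 0) :
    u ∈ (Submodule.span ℝ s)ᗮ := by
  rw [Submodule.mem_orthogonal]
  intro w hw
  induction hw using Submodule.span_induction with
  | mem w hw => exact h w hw
  | zero => simp
  | add a b _ _ ha hb => simp [inner_add_left, ha, hb]
  | smul c a _ ha => simp [inner_smul_left, ha]

/-- combinatorial core of Lemma 20.1 of the paper.
Let `S ⊆ S′ ⊆ Δ` with `ω(S) ∩ S′ = S`. Then (a) `ω(S′) ⊆ ω(S) ∪ S′`;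
(b) `pr_S α = pr_{S′} α` for every `α ∈ ω(S′) \ S′`; and (c) consequently
`⟨λ, pr_{S′}(α∨)⟩ = ⟨λ, pr_S(α∨)⟩` for every `λ ∈ V` and `α ∈ ω(S′) \ S′`. -/
theorem transferLemma
    {V : Type*} [NormedAddCommGroup V] [InnerProductSpace ℝ V] [FiniteDimensional ℝ V]
    (Φ Δ Φpos : Finset V) (h : IsRootBase Φ Δ Φpos)
    (μ₀ : V) (hμ₀ : μ₀ ≠ 0) (hdom : ∀ α ∈ Δ, 0 ≤ ⟪μ₀, coroot α⟫)
    (S S' : Set V) (hSS' : S ⊆ S') (hS' : S' ⊆ (Δ : Set V))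
    (hωS : om μ₀ Δ S ∩ S' = S) :
    om μ₀ Δ S' ⊆ om μ₀ Δ S ∪ S' ∧
    (∀ α ∈ om μ₀ Δ S' \ S', pr S α = pr S' α) ∧
    (∀ lam : V, ∀ α ∈ om μ₀ Δ S' \ S',
      ⟪lam, pr S' (coroot α)⟫ = ⟪lam, pr S (coroot α)⟫) := by

  have hSΔ : S ⊆ (Δ : Set V) := hSS'.trans hS'
  set K : Set V := kap μ₀ S with hK
  set K' : Set V := kap μ₀ S' with hK'
  have hKK' : K ⊆ K' := kap_mono hSS'
  have hK'S' : K' ⊆ S' := kap_subset μ₀ S'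
  have main : ∀ α ∈ om μ₀ Δ S' \ S',
      α ∈ (Δ : Set V) ∧ ∀ v ∈ insert μ₀ K', ⟪α, v⟫ = 0 := by
    rintro α ⟨hα1, hα2⟩
    obtain ⟨Υ, hΥΔ, hkΥ, hαΥ⟩ := mem_om_iff.mp hα1
    refine ⟨hΥΔ hαΥ, ?_⟩
    intro v hv
    by_contra hne
    have hmem : α ∈ kap μ₀ Υ := absorb hαΥ (by rw [hkΥ]; exact hv) hne
    rw [hkΥ] at hmem
    exact hα2 (hK'S' hmem)
  have fact3 : ∀ β ∈ S' \ S, β ∈ K' := by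
    rintro β ⟨hβ1, hβ2⟩
    by_cases horth : ∀ v ∈ insert μ₀ K, ⟪β, v⟫ = 0
    · have hkins : kap μ₀ (insert β S) = kap μ₀ S := kap_insert_of_orth hμ₀ horth
      have hom : β ∈ om μ₀ Δ S := mem_om_iff.mpr ⟨insert β S,
        Set.insert_subset (hS' hβ1) hSΔ, hkins, Set.mem_insert _ _⟩
      exact absurd (hωS ▸ (⟨hom, hβ1⟩ : β ∈ om μ₀ Δ S ∩ S')) hβ2
    · push_neg at horth
      obtain ⟨v, hv, hne⟩ := horth
      exact absorb hβ1 (Set.insert_subset_insert hKK' hv) hne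
  have fact1 : ∀ γ ∈ S', γ ∉ K' → ∀ v ∈ K', ⟪γ, v⟫ = 0 := by
    intro γ hγ hγK v hv
    by_contra hne
    exact hγK (absorb hγ (Set.mem_insert_of_mem _ hv) hne)
  have partb : ∀ α ∈ om μ₀ Δ S' \ S', pr S α = pr S' α := by
    intro α hα
    obtain ⟨hαΔ, horth⟩ := main α hα
    set N : Submodule ℝ V := Submodule.span ℝ (S \ K') with hN
    set p : V := (N.orthogonalProjectionOnto α : V) with hp
    have hpN : p ∈ N := (N.orthogonalProjectionOnto α).2
    have hsub : α - p ∈ Nᗮ := N.sub_starProjection_mem_orthogonal α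
    have hNle : N ≤ Submodule.span ℝ S := Submodule.span_mono Set.diff_subset
    have hpS : p ∈ Submodule.span ℝ S := hNle hpN
    have hpS' : p ∈ Submodule.span ℝ S' := Submodule.span_mono hSS' hpS
    have hperp : α - p ∈ (Submodule.span ℝ S')ᗮ := by
      refine span_orth_of_forall ?_
      intro w hw
      by_cases hwK' : w ∈ K'
      · have h1 : ⟪w, α⟫ = 0 := by
          rw [real_inner_comm]; exact horth w (Set.mem_insert_of_mem _ hwK')
        have h2 : ⟪w, p⟫ = 0 := by
          have hwN : w ∈ Nᗮ :=
            span_orth_of_forall (fun u hu => fact1 u (hSS' hu.1) hu.2 w hwK')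
          rw [real_inner_comm]
          exact (Submodule.mem_orthogonal N w).mp hwN p hpN
        simp [inner_sub_right, h1, h2]
      · have hwS : w ∈ S := by
          by_contra h; exact hwK' (fact3 w ⟨hw, h⟩)
        have hwN : w ∈ N := Submodule.subset_span ⟨hwS, hwK'⟩
        exact (Submodule.mem_orthogonal N (α - p)).mp hsub w hwN
    have e2 : pr S α = α - p := by
      refine Submodule.eq_starProjection_of_mem_orthogonal
        (Submodule.orthogonal_le (Submodule.span_mono hSS') hperp) ?_
      rw [sub_sub_cancel, Submodule.orthogonal_orthogonal]
      exact hpS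
    have e1 : pr S' α = α - p := by
      refine Submodule.eq_starProjection_of_mem_orthogonal hperp ?_
      rw [sub_sub_cancel, Submodule.orthogonal_orthogonal]
      exact hpS'
    rw [e1, e2]
  refine ⟨?_, partb, ?_⟩
  · intro α hα
    by_cases hαS' : α ∈ S'
    · exact Or.inr hαS'
    · obtain ⟨hαΔ, horth⟩ := main α ⟨hα, hαS'⟩
      have horthK : ∀ v ∈ insert μ₀ K, ⟪α, v⟫ = 0 := fun v hv =>
        horth v (Set.insert_subset_insert hKK' hv)
      exact Or.inl (mem_om_iff.mpr ⟨insert α S, Set.insert_subset hαΔ hSΔ,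
        kap_insert_of_orth hμ₀ horthK, Set.mem_insert _ _⟩)
  · intro lam α hα
    have hb := partb α hα
    have hsm : ∀ T : Set V, pr T (coroot α) = (2 / ⟪α, α⟫) • pr T α := by
      intro T; simp [pr, coroot, map_smul]
    rw [hsm, hsm, hb]
end
end
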